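/- With the notation above (f_1, ..., f_{g-1} edges whose removal leaves a connected graph G' with unique cycle C), the hyperplane H = span{π(f_1), ..., π(f_{g-1})} in H_1(G,ℝ) equals the orthogonal complement of C within H_1(G,ℝ), i.e., H = C^⊥ ∩ H_1(G,ℝ). -/

import Mathlib

open scoped Classical

variable {V E : Type} [Fintype V] [Fintype E] [DecidableEq V] [DecidableEq E]

/-- Reachability between vertices using (undirected) edges from the set `A`. -/
def ReachIn (ι : E → V × V) (A : Set E) (a b : V) : Prop :=
  Relation.ReflTransGen (fun x y => ∃ e ∈ A, ι e = (x, y) ∨ ι e = (y, x)) a b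

/-- The graph with edge set `A` (on all of `V`) is connected. -/
def Conn (ι : E → V × V) (A : Set E) : Prop := ∀ a b : V, ReachIn ι A a b

/-- `C : E → ℤ` is the signed indicator vector of a (simple, directed) cycle:
entries in `{-1,0,1}`, nonempty support, zero boundary, every vertex meets
0 or 2 support edges, and the support is connected. -/
def IsCycleVec (ι : E → V × V) (C : E → ℤ) : Prop :=
  (∀ e, C e = 0 ∨ C e = 1 ∨ C e = -1) ∧
  (∃ e, C e ≠ 0) ∧
  (∀ v : V, ∑ e : E, C e *
      ((if (ι e).2 = v then 1 else 0) - (if (ι e).1 = v then 1 else 0)) = 0) ∧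
  (∀ v : V,
    (Finset.univ.filter fun e => C e ≠ 0 ∧ ((ι e).1 = v ∨ (ι e).2 = v)).card = 0 ∨
    (Finset.univ.filter fun e => C e ≠ 0 ∧ ((ι e).1 = v ∨ (ι e).2 = v)).card = 2) ∧
  (∀ a b : V, (∃ e, C e ≠ 0 ∧ ((ι e).1 = a ∨ (ι e).2 = a)) →
    (∃ e, C e ≠ 0 ∧ ((ι e).1 = b ∨ (ι e).2 = b)) →
    ReachIn ι {e | C e ≠ 0} a b)

/-- The standard basis vector of an edge in the real edge space. -/
noncomputable def edgeVec (f : E) : EuclideanSpace ℝ E := EuclideanSpace.single f 1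

/-- The real vector of an integral cycle vector. -/
def cycVecR (C : E → ℤ) : EuclideanSpace ℝ E := WithLp.toLp 2 (fun e => ((C e : ℝ)))

/-- The cycle space `H₁(G,ℝ)`: the span of the signed cycle vectors. -/
noncomputable def cycleSpace (ι : E → V × V) : Submodule ℝ (EuclideanSpace ℝ E) :=
  Submodule.span ℝ {x | ∃ C : E → ℤ, IsCycleVec ι C ∧ x = cycVecR C}

/-- `π(f)`: the orthogonal projection of the edge basis vector onto the cycle space. -/
noncomputable def projCyc (ι : E → V × V) (f : E) : EuclideanSpace ℝ E :=
  (Submodule.orthogonalProjectionOnto (cycleSpace ι) (edgeVec f) : EuclideanSpace ℝ E)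

set_option linter.unusedSectionVars false


/-- The boundary map. -/
noncomputable def bnd (ι : E → V × V) : EuclideanSpace ℝ E →ₗ[ℝ] (V → ℝ) where
  toFun x := fun v => ∑ e, x e *
    ((if (ι e).2 = v then (1:ℝ) else 0) - (if (ι e).1 = v then (1:ℝ) else 0))
  map_add' x y := by
    funext v
    simp [add_mul, Finset.sum_add_distrib]
  map_smul' c x := by
    funext v
    simp [Finset.mul_sum, mul_assoc]

lemma bnd_edgeVec (ι : E → V × V) (e : E) (v : V) :
    bnd ι (edgeVec e) v
      = (if (ι e).2 = v then (1:ℝ) else 0) - (if (ι e).1 = v then (1:ℝ) else 0) := by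
  simp [bnd, edgeVec, EuclideanSpace.single_apply, ite_mul]

lemma cycleSpace_le_ker_bnd (ι : E → V × V) :
    cycleSpace ι ≤ LinearMap.ker (bnd ι) := by
  rw [cycleSpace, Submodule.span_le]
  rintro x ⟨C, hC, rfl⟩
  simp only [SetLike.mem_coe, LinearMap.mem_ker]
  funext v
  have h := hC.2.2.1 v
  have h2 : ((∑ e, C e * ((if (ι e).2 = v then 1 else 0)
      - (if (ι e).1 = v then 1 else 0)) : ℤ) : ℝ) = 0 := by
    rw [h]; norm_num
  push_cast at h2
  simpa [bnd, cycVecR] using h2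

/-- Restriction to coordinates in `S`. -/
noncomputable def restr (S : Finset E) : EuclideanSpace ℝ E →ₗ[ℝ] (S → ℝ) where
  toFun x := fun f => x f
  map_add' x y := rfl
  map_smul' c x := rfl

lemma restr_apply (S : Finset E) (x : EuclideanSpace ℝ E) (f : S) :
    restr S x f = x f := rfl

lemma mem_ker_restr {S : Finset E} {x : EuclideanSpace ℝ E} :
    x ∈ LinearMap.ker (restr S) ↔ ∀ f ∈ S, x f = 0 := by
  rw [LinearMap.mem_ker]
  constructor
  · intro h f hf
    exact congrFun h ⟨f, hf⟩
  · intro h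
    funext f
    exact h f f.2

/-- Unit coordinate vector. -/
def uvec (v : V) : V → ℝ := fun w => if v = w then 1 else 0

lemma uvec_sub_mem_range (ι : E → V × V) (S : Finset E) {a b : V}
    (h : ReachIn ι {e | e ∉ S} a b) :
    uvec b - uvec a ∈
      LinearMap.range ((bnd ι).domRestrict (LinearMap.ker (restr S))) := by
  induction h with
  | refl => simpa using zero_mem _
  | @tail b c h' hr ih =>
    obtain ⟨e, heS, hcase⟩ := hr
    have hedge : edgeVec e ∈ LinearMap.ker (restr S) := by
      rw [mem_ker_restr]
      intro f hf
      have : f ≠ e := by rintro rfl; exact heS hf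
      simp [edgeVec, EuclideanSpace.single_apply, this]
    have key : ∀ (x y : V), ι e = (x, y) →
        uvec y - uvec x ∈
          LinearMap.range ((bnd ι).domRestrict (LinearMap.ker (restr S))) := by
      intro x y hxy
      refine ⟨⟨edgeVec e, hedge⟩, ?_⟩
      funext v
      simp only [LinearMap.domRestrict_apply]
      rw [bnd_edgeVec, hxy]
      simp [uvec, eq_comm]
    have hbc : uvec c - uvec b ∈
        LinearMap.range ((bnd ι).domRestrict (LinearMap.ker (restr S))) := by
      rcases hcase with h1 | h1
      · exact key b c h1
      · have := key c b h1
        have := neg_mem this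
        simpa using this
    rw [show uvec c - uvec a = (uvec c - uvec b) + (uvec b - uvec a) by abel]
    exact add_mem hbc ih

lemma finrank_inf_le_one (ι : E → V × V) (S : Finset E)
    (hcard : S.card + Fintype.card V = Fintype.card E)
    (hconn' : Conn ι {e | e ∉ S}) (v₀ : V) :
    Module.finrank ℝ
      ↥(LinearMap.ker (restr S) ⊓ LinearMap.ker (bnd ι)) ≤ 1 := by
  set Z := LinearMap.ker (restr S) with hZ
  -- dimension of Z
  have hsurj : LinearMap.range (restr S) = ⊤ := by
    rw [LinearMap.range_eq_top]
    intro y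
    refine ⟨(WithLp.toLp 2 (fun e => if h : e ∈ S then y ⟨e, h⟩ else 0) : EuclideanSpace ℝ E), ?_⟩
    funext f
    rw [restr_apply]
    simp [f.2]
  have hZrank : Module.finrank ℝ Z = Fintype.card V := by
    have h := LinearMap.finrank_range_add_finrank_ker (restr S)
    rw [hsurj] at h
    rw [finrank_top] at h
    have h1 : Module.finrank ℝ ({ x // x ∈ S } → ℝ) = S.card := by
      simp [Module.finrank_pi]
    have h2 : Module.finrank ℝ (EuclideanSpace ℝ E) = Fintype.card E :=
      finrank_euclideanSpace
    rw [h1, h2] at h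
    rw [hZ]
    omega
  set D := (bnd ι).domRestrict Z with hD
  -- range of D is at least card V - 1 dimensional
  have hT : Fintype.card V ≤ Module.finrank ℝ (LinearMap.range D) + 1 := by
    set T := Submodule.span ℝ (Set.range fun v : V => uvec v - uvec v₀) with hTdef
    have hTle : T ≤ LinearMap.range D := by
      rw [hTdef, Submodule.span_le]
      rintro _ ⟨v, rfl⟩
      exact uvec_sub_mem_range ι S (hconn' v₀ v)
    have htop : T ⊔ Submodule.span ℝ {uvec v₀} = ⊤ := by
      rw [eq_top_iff]
      rintro x -
      rw [pi_eq_sum_univ x]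
      refine Submodule.sum_mem _ fun v _ => Submodule.smul_mem _ _ ?_
      have hv : (fun j => if v = j then (1:ℝ) else 0) = (uvec v - uvec v₀) + uvec v₀ := by
        funext j; simp [uvec]
      rw [hv]
      exact add_mem
        (Submodule.mem_sup_left (Submodule.subset_span ⟨v, rfl⟩))
        (Submodule.mem_sup_right (Submodule.subset_span rfl))
    have h1 : Module.finrank ℝ (⊤ : Submodule ℝ (V → ℝ)) = Fintype.card V := by
      rw [finrank_top]; simp [Module.finrank_pi]
    have h2 := Submodule.finrank_sup_add_finrank_inf_eq T (Submodule.span ℝ {uvec v₀})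
    have h3 : Module.finrank ℝ (Submodule.span ℝ {uvec v₀}) ≤ 1 :=
      finrank_span_le_card ({uvec v₀} : Set (V → ℝ)) |>.trans (by simp)
    have h4 : Module.finrank ℝ T ≤ Module.finrank ℝ (LinearMap.range D) :=
      Submodule.finrank_mono hTle
    rw [htop] at h2
    omega
  have hrn := LinearMap.finrank_range_add_finrank_ker D
  rw [hZrank] at hrn
  -- ker D has the same dimension as the intersection
  have hker : Module.finrank ℝ (LinearMap.ker D)
      = Module.finrank ℝ ↥(Z ⊓ LinearMap.ker (bnd ι)) := by
    have h1 : Submodule.comap Z.subtype (Z ⊓ LinearMap.ker (bnd ι)) = LinearMap.ker D := by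
      ext x
      simp [LinearMap.mem_ker, hD, LinearMap.domRestrict_apply, x.2]
    rw [← h1]
    exact (Submodule.comapSubtypeEquivOfLe inf_le_left).finrank_eq
  omega

lemma inner_edgeVec (f : E) (z : EuclideanSpace ℝ E) :
    inner ℝ (edgeVec f) z = z f := by
  rw [edgeVec, EuclideanSpace.inner_single_left]
  simp


/-- with `S` a set of `g-1` edges whose removal leaves a connected graph with
unique cycle `C`, the hyperplane `span{π(f) : f ∈ S}` of the cycle space equals
`C^⊥ ∩ H₁(G,ℝ)`. -/
theorem span_proj_eq_cycle_perp (ι : E → V × V)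
    (hconn : Conn ι Set.univ) (S : Finset E)
    (hcard : (S.card : ℤ) = (Fintype.card E : ℤ) - (Fintype.card V : ℤ))
    (hconn' : Conn ι {e | e ∉ S})
    (C : E → ℤ) (hC : IsCycleVec ι C) (hCS : ∀ e ∈ S, C e = 0) :
    Submodule.span ℝ (projCyc ι '' (S : Set E)) =
      (Submodule.span ℝ {cycVecR C})ᗮ ⊓ cycleSpace ι := by
  classical
  set K := cycleSpace ι with hK
  set Cv : EuclideanSpace ℝ E := cycVecR C with hCv
  obtain ⟨e₀, he₀⟩ := hC.2.1
  have hCvK : Cv ∈ K := Submodule.subset_span ⟨C, hC, rfl⟩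
  have hCvne : Cv ≠ 0 := by
    intro h
    apply he₀
    have h0 : (C e₀ : ℝ) = 0 := by simpa [hCv, cycVecR] using congrArg (fun x => x e₀) h
    exact_mod_cast h0
  have hproj_mem : ∀ f, projCyc ι f ∈ K := fun f =>
    (Submodule.orthogonalProjectionOnto K (edgeVec f)).2
  have hinner : ∀ f, ∀ z ∈ K, (inner ℝ (projCyc ι f) z : ℝ) = z f := by
    intro f z hz
    have h0 : (inner ℝ (edgeVec f - projCyc ι f) z : ℝ) = 0 :=
      Submodule.starProjection_inner_eq_zero (K := K) (edgeVec f) z hz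
    rw [inner_sub_left, sub_eq_zero] at h0
    rw [← h0]
    exact inner_edgeVec f z
  have hCperp : ∀ f ∈ S, projCyc ι f ∈ (Submodule.span ℝ {Cv})ᗮ := by
    intro f hf
    rw [Submodule.mem_orthogonal_singleton_iff_inner_right, real_inner_comm]
    rw [hinner f Cv hCvK]
    have : C f = 0 := hCS f hf
    simp [hCv, cycVecR, this]
  set L := Submodule.span ℝ (projCyc ι '' (S : Set E)) with hL
  have hLK : L ≤ K := by
    rw [hL, Submodule.span_le]
    rintro _ ⟨f, hf, rfl⟩
    exact hproj_mem f
  have hLperp : L ≤ (Submodule.span ℝ {Cv})ᗮ := by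
    rw [hL, Submodule.span_le]
    rintro _ ⟨f, hf, rfl⟩
    exact hCperp f hf
  apply le_antisymm
  · exact le_inf hLperp hLK
  -- the hard direction
  have hcardN : S.card + Fintype.card V = Fintype.card E := by omega
  -- the intersection submodule equals span of Cv
  have hCvZ : Cv ∈ LinearMap.ker (restr S) := by
    rw [mem_ker_restr]
    intro f hf
    have : C f = 0 := hCS f hf
    simp [hCv, cycVecR, this]
  have hCvker : Cv ∈ LinearMap.ker (bnd ι) := cycleSpace_le_ker_bnd ι hCvK
  have hUeq : LinearMap.ker (restr S) ⊓ LinearMap.ker (bnd ι)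
      = Submodule.span ℝ {Cv} := by
    refine (Submodule.eq_of_le_of_finrank_le ?_ ?_).symm
    · rw [Submodule.span_le]
      rintro x hx
      rw [Set.mem_singleton_iff] at hx
      subst hx
      exact ⟨hCvZ, hCvker⟩
    · rw [finrank_span_singleton hCvne]
      exact finrank_inf_le_one ι S hcardN hconn' (ι e₀).1
  rintro z ⟨hzperp, hzK⟩
  set z₁ : EuclideanSpace ℝ E := ↑(Submodule.orthogonalProjectionOnto L z) with hz₁
  have hz₁L : z₁ ∈ L := (Submodule.orthogonalProjectionOnto L z).2
  set z₂ := z - z₁ with hz₂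
  have hz₂perp : z₂ ∈ Lᗮ := Submodule.sub_starProjection_mem_orthogonal (K := L) z
  have hz₂K : z₂ ∈ K := sub_mem hzK (hLK hz₁L)
  have hz₂S : ∀ f ∈ S, z₂ f = 0 := by
    intro f hf
    have hmem : projCyc ι f ∈ L := Submodule.subset_span ⟨f, hf, rfl⟩
    have := hz₂perp (projCyc ι f) hmem
    rw [← hinner f z₂ hz₂K]
    exact this
  have hz₂U : z₂ ∈ Submodule.span ℝ {Cv} := by
    rw [← hUeq]
    refine ⟨?_, cycleSpace_le_ker_bnd ι hz₂K⟩
    show z₂ ∈ LinearMap.ker (restr S)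
    exact mem_ker_restr.2 hz₂S
  obtain ⟨c, hc⟩ := Submodule.mem_span_singleton.1 hz₂U
  -- inner products with Cv
  have hinnerz : (inner ℝ Cv z : ℝ) = 0 :=
    Submodule.mem_orthogonal_singleton_iff_inner_right.1 hzperp
  have hinnerz₁ : (inner ℝ Cv z₁ : ℝ) = 0 := by
    have := hLperp hz₁L
    exact Submodule.mem_orthogonal_singleton_iff_inner_right.1 this
  have hinnerz₂ : (inner ℝ Cv z₂ : ℝ) = 0 := by
    rw [hz₂, inner_sub_right, hinnerz, hinnerz₁, sub_zero]
  have hc0 : c = 0 := by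
    rw [← hc, real_inner_smul_right] at hinnerz₂
    have hCip : (inner ℝ Cv Cv : ℝ) ≠ 0 := inner_self_ne_zero.2 hCvne
    rcases mul_eq_zero.1 hinnerz₂ with h | h
    · exact h
    · exact absurd h hCip
  have : z₂ = 0 := by rw [← hc, hc0, zero_smul]
  have hz : z = z₁ := by
    have := sub_eq_zero.1 (hz₂ ▸ this)
    exact this
  rw [hz]
  exact hz₁L
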